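/- For vectors $s, y \in \mathbb{R}^n$ with $s^T y > 0$ and a parameter $\gamma > 0$, define $\alpha(\gamma) = \frac{\|s\|^2 - \|y\|^2/\gamma^2 + \sqrt{(\|s\|^2 - \|y\|^2/\gamma^2)^2 + 4(s^Ty)^2/\gamma^2}}{2 s^T y}$. Then $\alpha(\gamma)$ is the unique global minimizer over $\alpha \in \mathbb{R}$ of the function $\alpha \mapsto \frac{\|\alpha y - s\|^2}{1/\gamma^2 + \alpha^2}$. -/
import Mathlib

lemma aux_stmt0 (S Y c d αγ : ℝ) (hc : 0 < c) (hd : 0 < d)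
    (hαγ : αγ = (S - Y*d + Real.sqrt ((S - Y*d)^2 + 4*c^2*d))/(2*c)) :
    (∀ α : ℝ, (αγ^2*Y - 2*c*αγ + S)/(d+αγ^2) ≤ (α^2*Y - 2*c*α + S)/(d+α^2)) ∧
    (∀ α : ℝ, (α^2*Y - 2*c*α + S)/(d+α^2) = (αγ^2*Y - 2*c*αγ + S)/(d+αγ^2) → α = αγ) := by
  set A : ℝ := S - Y*d with hA
  set R : ℝ := Real.sqrt (A^2 + 4*c^2*d) with hR
  have hRnn : 0 ≤ R := Real.sqrt_nonneg _
  have hR2 : R^2 = A^2 + 4*c^2*d := Real.sq_sqrt (by positivity)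
  have h4 : 0 < 4*c^2*d := by positivity
  have hRgtA : A < R := by nlinarith [sq_nonneg (R - A), sq_nonneg (R + A)]
  have hRgtA' : -A < R := by nlinarith [sq_nonneg (R - A), sq_nonneg (R + A)]
  set m : ℝ := (S + Y*d - R)/(2*d) with hm
  have hYm : Y - m = (R - A)/(2*d) := by
    rw [hm, hA]; field_simp; ring
  have hYm0 : 0 < Y - m := by
    rw [hYm]; apply div_pos <;> linarith
  have hc1 : (Y - m)*αγ = c := by
    rw [hYm, hαγ]
    field_simp
    nlinarith [hR2]
  have hc2 : m*d + c*αγ = S := by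
    rw [hm, hαγ]
    field_simp
    ring
  have hid : ∀ α : ℝ, α^2*Y - 2*c*α + S = m*(d+α^2) + (Y-m)*(α-αγ)^2 := by
    intro α
    linear_combination (2*α - αγ)*hc1 - hc2
  have hpos : ∀ α : ℝ, 0 < d + α^2 := fun α => by positivity
  have hfm : ∀ α : ℝ, (α^2*Y - 2*c*α + S)/(d+α^2) = m + (Y-m)*(α-αγ)^2/(d+α^2) := by
    intro α
    rw [hid α]
    field_simp
  have hfαγ : (αγ^2*Y - 2*c*αγ + S)/(d+αγ^2) = m := by
    rw [hfm]; simp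
  constructor
  · intro α
    rw [hfαγ, hfm]
    have h := div_nonneg (mul_nonneg hYm0.le (sq_nonneg (α - αγ))) (hpos α).le
    linarith
  · intro α hα
    rw [hfαγ, hfm] at hα
    have h0 : (Y-m)*(α-αγ)^2/(d+α^2) = 0 := by linarith
    rcases div_eq_zero_iff.mp h0 with h1 | h1
    · rcases mul_eq_zero.mp h1 with h2 | h2
      · exact absurd h2 (by linarith)
      · have := pow_eq_zero_iff (n := 2) (by norm_num) |>.mp h2
        linarith [sub_eq_zero.mp this]
    · exact absurd h1 (by linarith [hpos α])

theorem stmt_0 (n : ℕ) (s y : Fin n → ℝ) (hsy : 0 < ∑ i, s i * y i)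
    (γ : ℝ) (hγ : 0 < γ) :
    let c : ℝ := ∑ i, s i * y i
    let αγ : ℝ := ((∑ i, s i ^ 2) - (∑ i, y i ^ 2) / γ ^ 2 +
      Real.sqrt (((∑ i, s i ^ 2) - (∑ i, y i ^ 2) / γ ^ 2) ^ 2 + 4 * c ^ 2 / γ ^ 2)) / (2 * c)
    let f : ℝ → ℝ := fun α => (∑ i, (α * y i - s i) ^ 2) / (1 / γ ^ 2 + α ^ 2)
    (∀ α : ℝ, f αγ ≤ f α) ∧ (∀ α : ℝ, f α = f αγ → α = αγ) := by
  intro c αγ f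
  have hc : (0:ℝ) < c := hsy
  have hd : (0:ℝ) < 1/γ^2 := by positivity
  have hαγ : αγ = ((∑ i, s i ^ 2) - (∑ i, y i ^ 2)*(1/γ^2) +
      Real.sqrt (((∑ i, s i ^ 2) - (∑ i, y i ^ 2)*(1/γ^2))^2 + 4*c^2*(1/γ^2)))/(2*c) := by
    show ((∑ i, s i ^ 2) - (∑ i, y i ^ 2) / γ ^ 2 +
      Real.sqrt (((∑ i, s i ^ 2) - (∑ i, y i ^ 2) / γ ^ 2) ^ 2 + 4 * c ^ 2 / γ ^ 2)) / (2 * c) = _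
    rw [mul_one_div (∑ i, y i ^ 2) (γ^2), mul_one_div (4*c^2) (γ^2)]
  have key := aux_stmt0 (∑ i, s i ^ 2) (∑ i, y i ^ 2) c (1/γ^2) αγ hc hd hαγ
  have hexp : ∀ α : ℝ, (∑ i, (α * y i - s i) ^ 2)
      = α^2*(∑ i, y i ^ 2) - 2*c*α + (∑ i, s i ^ 2) := by
    intro α
    have h : ∀ i, (α * y i - s i)^2 = α^2*(y i^2) - 2*α*(s i * y i) + s i^2 := fun i => by ring
    simp_rw [h]
    rw [Finset.sum_add_distrib, Finset.sum_sub_distrib, ← Finset.mul_sum, ← Finset.mul_sum]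
    rw [show (∑ i, s i * y i) = c from rfl]
    ring
  have hfeq : ∀ α : ℝ, f α = (α^2*(∑ i, y i ^ 2) - 2*c*α + (∑ i, s i ^ 2))/((1/γ^2) + α^2) := by
    intro α
    show (∑ i, (α * y i - s i) ^ 2) / (1 / γ ^ 2 + α ^ 2) = _
    rw [hexp α]
  constructor
  · intro α
    rw [hfeq α, hfeq αγ]
    exact key.1 α
  · intro α hα
    refine key.2 α ?_
    rw [← hfeq α, ← hfeq αγ]
    exact hα
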